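/- For all t ∈ (0, π/2) and for all p ∈ (-∞,-1] ∪ [9,∞), the inequality sin t / t < (2p + (p+3)cos t)/((3p+1) + 2cos t) holds. -/

import Mathlib

open Real

/-- Integration step: if `f 0 = 0` and `f' > 0` on `(0, π/2)`, then `f > 0` there. -/
lemma aux_step {f f' : ℝ → ℝ} (hder : ∀ x, HasDerivAt f (f' x) x) (h0 : f 0 = 0)
    (hpos : ∀ x ∈ Set.Ioo 0 (Real.pi/2), 0 < f' x) :
    ∀ x ∈ Set.Ioo 0 (Real.pi/2), 0 < f x := by
  intro x hx
  have hmono : StrictMonoOn f (Set.Icc 0 (Real.pi/2)) := by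
    apply strictMonoOn_of_deriv_pos (convex_Icc _ _)
    · exact fun y _ => (hder y).continuousAt.continuousWithinAt
    · intro y hy
      rw [interior_Icc] at hy
      rw [(hder y).deriv]
      exact hpos y hy
  have hpi : (0:ℝ) ≤ Real.pi/2 := by positivity
  have := hmono (Set.left_mem_Icc.mpr hpi) ⟨hx.1.le, hx.2.le⟩ hx.1
  simpa [h0] using this

lemma aux_sin2 (x : ℝ) :
    HasDerivAt (fun y : ℝ => Real.sin (2*y)) (Real.cos (2*x) * 2) x := by
  have h := (Real.hasDerivAt_sin (2*x)).comp x ((hasDerivAt_id' (x := x)).const_mul 2)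
  simpa [Function.comp_def] using h

lemma aux_cos2 (x : ℝ) :
    HasDerivAt (fun y : ℝ => Real.cos (2*y)) (-Real.sin (2*x) * 2) x := by
  have h := (Real.hasDerivAt_cos (2*x)).comp x ((hasDerivAt_id' (x := x)).const_mul 2)
  simpa [Function.comp_def] using h

/-- A lower bound for `1 - cos x` on `(0, π/2)`. -/
lemma aux_one_sub_cos {x : ℝ} (hx0 : 0 < x) (hx2 : x < Real.pi/2) :
    x^2/2 - x^4/16 < 1 - Real.cos x := by
  have hπ : Real.pi < 3.15 := Real.pi_lt_d2
  have hx158 : x < 1.575 := by linarith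
  have hhalf : x/2 - (x/2)^3/4 < Real.sin (x/2) :=
    by have := Real.sin_gt_sub_cube (x := x/2) (by linarith); nlinarith [pow_pos (show (0:ℝ) < x/2 by linarith) 3]
  have hx16 : x^2 < 16 := by nlinarith
  have hhalfpos : 0 < x/2 - (x/2)^3/4 := by nlinarith [mul_pos hx0 (show (0:ℝ) < 16 - x^2 by linarith)]
  have hsq : (x/2 - (x/2)^3/4)^2 < Real.sin (x/2)^2 := by
    nlinarith [mul_pos (sub_pos.mpr hhalf)
      (show 0 < Real.sin (x/2) + (x/2 - (x/2)^3/4) by linarith)]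
  have hpy := Real.sin_sq_add_cos_sq (x/2)
  have hcc : Real.cos x = 2 * Real.cos (x/2)^2 - 1 := by
    have := Real.cos_two_mul (x/2)
    rwa [show 2*(x/2) = x by ring] at this
  nlinarith [hsq, pow_nonneg hx0.le 6]

/-- Key inequality: `sin t * (14 + cos t) < t * (9 + 6 cos t)` on `(0, π/2)`. -/
lemma aux_key {t : ℝ} (ht : t ∈ Set.Ioo 0 (Real.pi/2)) :
    Real.sin t * (14 + Real.cos t) < t * (9 + 6 * Real.cos t) := by
  have hπ : Real.pi < 3.15 := Real.pi_lt_d2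
  -- f5 positivity (base case)
  have h5 : ∀ x ∈ Set.Ioo 0 (Real.pi/2),
      0 < 16 * Real.cos x - 16 * Real.cos (2*x) - 6 * (x * Real.sin x) := by
    intro x hx
    obtain ⟨hx0, hx2⟩ := hx
    have hx158 : x < 1.575 := by linarith
    have hs_pos : 0 < Real.sin x := Real.sin_pos_of_pos_of_lt_pi hx0 (by linarith)
    have hs_lt : Real.sin x < x := Real.sin_lt hx0
    have hs_le : Real.sin x ≤ 1 := Real.sin_le_one x
    have hc_pos : 0 < Real.cos x := Real.cos_pos_of_mem_Ioo ⟨by linarith, hx2⟩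
    have hone_sub : x^2/2 - x^4/16 < 1 - Real.cos x := aux_one_sub_cos hx0 hx2
    have hx8 : x^2 < 8 := by nlinarith
    have hc_lt : Real.cos x < 1 := by
      nlinarith [mul_pos (mul_pos hx0 hx0) (show (0:ℝ) < 8 - x^2 by linarith)]
    have hcos2 : Real.cos (2*x) = 2 * Real.cos x ^ 2 - 1 := Real.cos_two_mul x
    rw [hcos2]
    have hA : 0 ≤ 2 * Real.cos x * (1 - Real.cos x) :=
      mul_nonneg (by linarith) (by linarith)
    rcases le_or_gt x 1 with hx1 | hx1
    · have hB : x * Real.sin x < x * x := mul_lt_mul_of_pos_left hs_lt hx0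
      have hC : x^4 ≤ x^2 := by nlinarith [mul_nonneg (sq_nonneg x) (show (0:ℝ) ≤ 1 - x^2 by nlinarith)]
      nlinarith [hA, hB, hC]
    · have hB : x * Real.sin x ≤ x * 1 := mul_le_mul_of_nonneg_left hs_le hx0.le
      have hD : 0 < (x - 1) * (1.575 - x) := mul_pos (by linarith) (by linarith)
      nlinarith [hA, hB, hD, mul_pos (mul_pos hx0 hx0) hx0, sq_nonneg (x-1)]
  -- f4
  have h4 : ∀ x ∈ Set.Ioo 0 (Real.pi/2),
      0 < 10 * Real.sin x - 8 * Real.sin (2*x) + 6 * (x * Real.cos x) := by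
    apply aux_step (f' := fun x => 16 * Real.cos x - 16 * Real.cos (2*x) - 6 * (x * Real.sin x))
    · intro x
      have h := (((Real.hasDerivAt_sin x).const_mul (10:ℝ)).sub ((aux_sin2 x).const_mul 8)).add
        (((hasDerivAt_id' (x := x)).mul (Real.hasDerivAt_cos x)).const_mul 6)
      refine h.congr_deriv ?_
      beta_reduce
      ring
    · norm_num
    · exact h5
  -- f3
  have h3 : ∀ x ∈ Set.Ioo 0 (Real.pi/2),
      0 < -4 * Real.cos x + 4 * Real.cos (2*x) + 6 * (x * Real.sin x) := by
    apply aux_step (f' := fun x => 10 * Real.sin x - 8 * Real.sin (2*x) + 6 * (x * Real.cos x))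
    · intro x
      have h := (((Real.hasDerivAt_cos x).const_mul (-4:ℝ)).add ((aux_cos2 x).const_mul 4)).add
        (((hasDerivAt_id' (x := x)).mul (Real.hasDerivAt_sin x)).const_mul 6)
      refine h.congr_deriv ?_
      beta_reduce
      ring
    · norm_num
    · exact h4
  -- f2
  have h2 : ∀ x ∈ Set.Ioo 0 (Real.pi/2),
      0 < 2 * Real.sin x + 2 * Real.sin (2*x) - 6 * (x * Real.cos x) := by
    apply aux_step (f' := fun x => -4 * Real.cos x + 4 * Real.cos (2*x) + 6 * (x * Real.sin x))
    · intro x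
      have h := (((Real.hasDerivAt_sin x).const_mul (2:ℝ)).add ((aux_sin2 x).const_mul 2)).sub
        (((hasDerivAt_id' (x := x)).mul (Real.hasDerivAt_cos x)).const_mul 6)
      refine h.congr_deriv ?_
      beta_reduce
      ring
    · norm_num
    · exact h3
  -- f1
  have h1 : ∀ x ∈ Set.Ioo 0 (Real.pi/2),
      0 < 9 - 8 * Real.cos x - Real.cos (2*x) - 6 * (x * Real.sin x) := by
    apply aux_step (f' := fun x => 2 * Real.sin x + 2 * Real.sin (2*x) - 6 * (x * Real.cos x))
    · intro x
      have h := (((hasDerivAt_const x (9:ℝ)).sub ((Real.hasDerivAt_cos x).const_mul 8)).sub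
        (aux_cos2 x)).sub (((hasDerivAt_id' (x := x)).mul (Real.hasDerivAt_sin x)).const_mul 6)
      refine h.congr_deriv ?_
      beta_reduce
      ring
    · norm_num
    · exact h2
  -- f0
  have h0 : ∀ x ∈ Set.Ioo 0 (Real.pi/2),
      0 < 9 * x + 6 * (x * Real.cos x) - 14 * Real.sin x - (1/2) * Real.sin (2*x) := by
    apply aux_step (f' := fun x => 9 - 8 * Real.cos x - Real.cos (2*x) - 6 * (x * Real.sin x))
    · intro x
      have h := ((((hasDerivAt_id' (x := x)).const_mul (9:ℝ)).add
        (((hasDerivAt_id' (x := x)).mul (Real.hasDerivAt_cos x)).const_mul 6)).sub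
        ((Real.hasDerivAt_sin x).const_mul 14)).sub ((aux_sin2 x).const_mul (1/2))
      refine h.congr_deriv ?_
      beta_reduce
      ring
    · norm_num
    · exact h1
  have hF := h0 t ht
  have hs2 : Real.sin (2*t) = 2 * Real.sin t * Real.cos t := Real.sin_two_mul t
  rw [hs2] at hF
  nlinarith [hF]

theorem stmt5 (t p : ℝ) (ht : t ∈ Set.Ioo 0 (Real.pi/2)) (hp : p ≤ -1 ∨ 9 ≤ p) :
    Real.sin t / t < (2*p + (p+3)*Real.cos t) / ((3*p+1) + 2*Real.cos t) := by
  obtain ⟨ht0, ht2⟩ := ht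
  have hπ : Real.pi < 3.15 := Real.pi_lt_d2
  have key := aux_key ⟨ht0, ht2⟩
  have hs_pos : 0 < Real.sin t := Real.sin_pos_of_pos_of_lt_pi ht0 (by linarith)
  have hs_lt : Real.sin t < t := Real.sin_lt ht0
  have hc_pos : 0 < Real.cos t := Real.cos_pos_of_mem_Ioo ⟨by linarith, ht2⟩
  have hone_sub : t^2/2 - t^4/16 < 1 - Real.cos t := aux_one_sub_cos ht0 ht2
  have ht158 : t < 1.575 := by linarith
  have ht8 : t^2 < 8 := by nlinarith
  have hc_lt : Real.cos t < 1 := by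
    nlinarith [mul_pos (mul_pos ht0 ht0) (show (0:ℝ) < 8 - t^2 by linarith)]
  -- Cusa-type consequence: 3 sin t < t (2 + cos t)
  have cusa : 3 * Real.sin t < t * (2 + Real.cos t) := by
    nlinarith [key, hc_pos, mul_nonneg ht0.le (sq_nonneg (1 - Real.cos t))]
  have hA : 0 < 2*t + t*Real.cos t - 3*Real.sin t := by nlinarith [cusa]
  rcases hp with hp | hp
  · -- denominator negative
    have hD : (3*p+1) + 2*Real.cos t < 0 := by linarith
    have heq : (2*p + (p+3)*Real.cos t) / ((3*p+1) + 2*Real.cos t)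
        = (-(2*p + (p+3)*Real.cos t)) / (-((3*p+1) + 2*Real.cos t)) := by
      rw [neg_div_neg_eq]
    rw [heq, div_lt_div_iff₀ ht0 (by linarith)]
    have h1 : 0 ≤ (-(p+1)) * (2*t + t*Real.cos t - 3*Real.sin t) :=
      mul_nonneg (by linarith) hA.le
    have h2 : 0 < (1 - Real.cos t) * (t - Real.sin t) :=
      mul_pos (by linarith) (by linarith)
    nlinarith [h1, h2]
  · -- denominator positive
    have hD : 0 < (3*p+1) + 2*Real.cos t := by linarith
    rw [div_lt_div_iff₀ ht0 hD]
    have h1 : 0 ≤ (p - 9) * (2*t + t*Real.cos t - 3*Real.sin t) :=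
      mul_nonneg (by linarith) hA.le
    nlinarith [h1, key]
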